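/- For every γ with ‖F‖_F/√ℓ < γ < σ_max(F), the constrained optimization identity −(1/2)·max{ ln det(ℓΠ) : Π ∈ ℝ^{ℓ×ℓ} positive definite, Tr Π = 1, Tr(ΛΠ) ≥ γ² } = min{ 𝒜(q) : q ∈ [0, σ_max(F)^{−2}), 𝒩(q) ≥ γ } holds, and the maximizing Π is proportional to S(q_γ) where q_γ is the unique point with 𝒩(q_γ) = γ. -/

import Mathlib

open MeasureTheory Real Matrix

/-- The largest singular value of `F`: the supremum of `‖F w‖` over unit vectors. -/
noncomputable def sigmaMax {s ℓ : ℕ} (F : Matrix (Fin s) (Fin ℓ) ℝ) : ℝ :=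
  sSup {x : ℝ | ∃ w : Fin ℓ → ℝ, (∑ i, (w i)^2) = 1 ∧ x = Real.sqrt (∑ j, (F.mulVec w j)^2)}

/-- `S(q) = (I − qΛ)⁻¹` with `Λ = FᵀF`. -/
noncomputable def Sq {s ℓ : ℕ} (F : Matrix (Fin s) (Fin ℓ) ℝ) (q : ℝ) :
    Matrix (Fin ℓ) (Fin ℓ) ℝ :=
  (1 - q • (Fᵀ * F))⁻¹

/-- `𝒜(q) = −(1/2)·ln det(ℓ·S(q)/Tr S(q))`. -/
noncomputable def Afun {s ℓ : ℕ} (F : Matrix (Fin s) (Fin ℓ) ℝ) (q : ℝ) : ℝ :=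
  -(1 / 2) * Real.log ((((ℓ : ℝ) / (Sq F q).trace) • Sq F q).det)

/-- `𝒩(q) = sqrt(Tr(Λ·S(q))/Tr S(q))`. -/
noncomputable def Nfun {s ℓ : ℕ} (F : Matrix (Fin s) (Fin ℓ) ℝ) (q : ℝ) : ℝ :=
  Real.sqrt ((Fᵀ * F * Sq F q).trace / (Sq F q).trace)

/-- `𝔄(q,γ) = (1/2)·ln det(I − qΛ) − (ℓ/2)·ln(1 − qγ²)`. -/
noncomputable def AAfun {s ℓ : ℕ} (F : Matrix (Fin s) (Fin ℓ) ℝ) (q γ : ℝ) : ℝ :=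
  (1 / 2) * Real.log (1 - q • (Fᵀ * F)).det - ((ℓ : ℝ) / 2) * Real.log (1 - q * γ^2)

/-- Frobenius norm of a matrix. -/
noncomputable def frobNorm {s ℓ : ℕ} (F : Matrix (Fin s) (Fin ℓ) ℝ) : ℝ :=
  Real.sqrt ((Fᵀ * F).trace)

section Aux
set_option linter.unusedSectionVars false
set_option linter.unusedVariables false

variable {n : ℕ}

lemma posDef_conj {A B : Matrix (Fin n) (Fin n) ℝ} (hA : A.PosDef) (hB : B * Bᴴ = 1) :
    (B * A * Bᴴ).PosDef := by
  refine posDef_iff_dotProduct_mulVec.mpr ⟨?_, ?_⟩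
  · exact Matrix.isHermitian_mul_mul_conjTranspose B hA.1
  · intro x hx
    have hxx : Bᴴ *ᵥ x ≠ 0 := by
      intro h
      apply hx
      have h2 : x = B *ᵥ (Bᴴ *ᵥ x) := by rw [mulVec_mulVec, hB, one_mulVec]
      rw [h, mulVec_zero] at h2
      exact h2
    have := hA.dotProduct_mulVec_pos hxx
    simpa only [star_mulVec, dotProduct_mulVec, vecMul_vecMul, conjTranspose_conjTranspose] using this

lemma exists_diag {A : Matrix (Fin n) (Fin n) ℝ} (hA : A.IsHermitian) :
    ∃ (U : Matrix (Fin n) (Fin n) ℝ) (lam : Fin n → ℝ),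
      U * Uᴴ = 1 ∧ Uᴴ * U = 1 ∧ A = U * diagonal lam * Uᴴ := by
  refine ⟨hA.eigenvectorUnitary, hA.eigenvalues, ?_, ?_, ?_⟩
  · rw [← Matrix.star_eq_conjTranspose]
    exact (Matrix.mem_unitaryGroup_iff).mp (hA.eigenvectorUnitary).2
  · rw [← Matrix.star_eq_conjTranspose]
    exact (Matrix.mem_unitaryGroup_iff').mp (hA.eigenvectorUnitary).2
  · have := hA.spectral_theorem
    rw [← Matrix.star_eq_conjTranspose]
    simpa [RCLike.ofReal_real_eq_id] using this

section diag

variable {A U : Matrix (Fin n) (Fin n) ℝ} {lam : Fin n → ℝ} {q : ℝ}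

lemma trace_conj (hU' : Uᴴ * U = 1) (X : Matrix (Fin n) (Fin n) ℝ) :
    (U * X * Uᴴ).trace = X.trace := by
  rw [trace_mul_cycle, hU', one_mul]

lemma dot_conj (hU' : Uᴴ * U = 1) (a b : Fin n → ℝ) :
    (U *ᵥ a) ⬝ᵥ (U *ᵥ b) = a ⬝ᵥ b := by
  rw [dotProduct_mulVec, ← mulVec_transpose, ← conjTranspose_eq_transpose_of_trivial,
    mulVec_mulVec, hU', one_mulVec]

lemma one_sub_eq (hU : U * Uᴴ = 1) (hA : A = U * diagonal lam * Uᴴ) :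
    1 - q • A = U * diagonal (fun i => 1 - q * lam i) * Uᴴ := by
  have hd : diagonal (fun i => 1 - q * lam i) = 1 - q • diagonal lam := by
    ext i j
    by_cases h : i = j <;> simp [Matrix.diagonal_apply, h, Matrix.one_apply]
  rw [hd, Matrix.mul_sub, Matrix.sub_mul, mul_one, hU, mul_smul_comm, smul_mul_assoc, ← hA]

lemma conj_mul_conj (hU' : Uᴴ * U = 1) (X Y : Matrix (Fin n) (Fin n) ℝ) :
    (U * X * Uᴴ) * (U * Y * Uᴴ) = U * (X * Y) * Uᴴ := by
  rw [show (U * X * Uᴴ) * (U * Y * Uᴴ) = U * X * (Uᴴ * U) * (Y * Uᴴ) by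
    simp only [Matrix.mul_assoc], hU', mul_one]
  simp only [Matrix.mul_assoc]

lemma inv_conj (hU : U * Uᴴ = 1) (hU' : Uᴴ * U = 1) {d : Fin n → ℝ} (hd : ∀ i, d i ≠ 0) :
    (U * diagonal d * Uᴴ)⁻¹ = U * diagonal (fun i => (d i)⁻¹) * Uᴴ := by
  apply Matrix.inv_eq_right_inv
  rw [conj_mul_conj hU', diagonal_mul_diagonal]
  have : (fun i => d i * (d i)⁻¹) = fun _ => (1:ℝ) := funext fun i => mul_inv_cancel₀ (hd i)
  rw [this, diagonal_one, mul_one, hU]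

lemma det_conj (hU : U * Uᴴ = 1) (X : Matrix (Fin n) (Fin n) ℝ) :
    (U * X * Uᴴ).det = X.det := by
  have h1 : U.det * Uᴴ.det = 1 := by rw [← det_mul, hU, det_one]
  rw [det_mul, det_mul]
  calc U.det * X.det * Uᴴ.det = (U.det * Uᴴ.det) * X.det := by ring
  _ = X.det := by rw [h1, one_mul]

end diag

lemma single_quad (lam : Fin n → ℝ) (i : Fin n) :
    ∑ j, lam j * ((Pi.single i 1 : Fin n → ℝ) j)^2 = lam i := by
  rw [Finset.sum_eq_single i] <;> simp +contextual [Pi.single_apply]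

section diag2
variable {A U : Matrix (Fin n) (Fin n) ℝ} {lam : Fin n → ℝ} {q : ℝ}
variable (hU : U * Uᴴ = 1) (hU' : Uᴴ * U = 1) (hA : A = U * diagonal lam * Uᴴ)
include hU hU' hA

lemma Sq_eq (h : ∀ i, 1 - q * lam i ≠ 0) :
    (1 - q • A)⁻¹ = U * diagonal (fun i => (1 - q * lam i)⁻¹) * Uᴴ := by
  rw [one_sub_eq hU hA, inv_conj hU hU' h]

lemma trace_Sq (h : ∀ i, 1 - q * lam i ≠ 0) :
    (1 - q • A)⁻¹.trace = ∑ i, (1 - q * lam i)⁻¹ := by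
  rw [Sq_eq hU hU' hA h, trace_conj hU', trace_diagonal]

lemma trace_mul_Sq (h : ∀ i, 1 - q * lam i ≠ 0) :
    (A * (1 - q • A)⁻¹).trace = ∑ i, lam i * (1 - q * lam i)⁻¹ := by
  rw [Sq_eq hU hU' hA h, hA, conj_mul_conj hU', diagonal_mul_diagonal, trace_conj hU',
    trace_diagonal]

lemma posDef_one_sub (h : ∀ i, 0 < 1 - q * lam i) : (1 - q • A).PosDef := by
  rw [one_sub_eq hU hA]
  exact posDef_conj (Matrix.PosDef.diagonal h) hU

lemma posDef_Sq (h : ∀ i, 0 < 1 - q * lam i) : ((1 - q • A)⁻¹).PosDef := by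
  rw [Sq_eq hU hU' hA (fun i => (h i).ne')]
  exact posDef_conj (Matrix.PosDef.diagonal (fun i => inv_pos.mpr (h i))) hU

lemma trace_A : A.trace = ∑ i, lam i := by
  rw [hA, trace_conj hU', trace_diagonal]

lemma det_A : A.det = ∏ i, lam i := by
  rw [hA, det_conj hU, det_diagonal]

lemma A_scalar (c : ℝ) (h : ∀ i, lam i = c) : A = c • 1 := by
  have : diagonal lam = c • 1 := by
    ext i j; by_cases hij : i = j <;> simp [Matrix.diagonal_apply, hij, h, Matrix.one_apply]
  rw [hA, this, mul_smul_comm, smul_mul_assoc, mul_one, hU]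

lemma quad_eq (a : Fin n → ℝ) :
    (U *ᵥ a) ⬝ᵥ (A *ᵥ (U *ᵥ a)) = ∑ i, lam i * (a i)^2 := by
  have h1 : A *ᵥ (U *ᵥ a) = U *ᵥ (diagonal lam *ᵥ a) := by
    rw [mulVec_mulVec, mulVec_mulVec, hA, Matrix.mul_assoc, Matrix.mul_assoc, hU', mul_one]
  rw [h1, dot_conj hU', dotProduct, ]
  congr 1; funext i
  rw [mulVec_diagonal]; ring

lemma eig_nonneg (hpsd : A.PosSemidef) (i : Fin n) : 0 ≤ lam i := by
  have := hpsd.dotProduct_mulVec_nonneg (U *ᵥ Pi.single i 1)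
  rw [star_trivial, quad_eq hU hU' hA, single_quad] at this
  exact this

lemma eig_pos (hpd : A.PosDef) (i : Fin n) : 0 < lam i := by
  have hx : (U *ᵥ Pi.single i 1) ≠ 0 := by
    intro h
    have h2 : Uᴴ *ᵥ (U *ᵥ Pi.single i 1) = Pi.single i 1 := by
      rw [mulVec_mulVec, hU', one_mulVec]
    rw [h, mulVec_zero] at h2
    have := congrFun h2 i
    simp at this
  have := hpd.dotProduct_mulVec_pos hx
  rw [star_trivial, quad_eq hU hU' hA, single_quad] at this
  exact this

end diag2

lemma posDef_conj2 {A M M' : Matrix (Fin n) (Fin n) ℝ} (hA : A.PosDef) (hM : M * M' = 1) :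
    (M * A * Mᴴ).PosDef := by
  refine posDef_iff_dotProduct_mulVec.mpr ⟨?_, ?_⟩
  · exact Matrix.isHermitian_mul_mul_conjTranspose M hA.1
  · intro x hx
    have hxx : Mᴴ *ᵥ x ≠ 0 := by
      intro h
      apply hx
      have h1 : M'ᴴ * Mᴴ = 1 := by rw [← conjTranspose_mul, hM, conjTranspose_one]
      have h2 : x = M'ᴴ *ᵥ (Mᴴ *ᵥ x) := by rw [mulVec_mulVec, h1, one_mulVec]
      rw [h, mulVec_zero] at h2
      exact h2
    have := hA.dotProduct_mulVec_pos hxx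
    simpa only [star_mulVec, dotProduct_mulVec, vecMul_vecMul, conjTranspose_conjTranspose] using this

/-- sum of eigenvalue identity: log det ≤ trace - n for posdef -/
lemma log_det_le_trace {C : Matrix (Fin n) (Fin n) ℝ} (hC : C.PosDef) :
    Real.log C.det ≤ C.trace - n := by
  obtain ⟨V, mu, hV, hV', hCd⟩ := exists_diag hC.1
  have hmu : ∀ i, 0 < mu i := eig_pos hV hV' hCd hC
  rw [det_A hV hV' hCd, trace_A hV hV' hCd]
  rw [Real.log_prod (fun i _ => (hmu i).ne')]
  have h1 : ∀ i ∈ Finset.univ, Real.log (mu i) ≤ mu i - 1 :=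
    fun i _ => Real.log_le_sub_one_of_pos (hmu i)
  calc ∑ i, Real.log (mu i) ≤ ∑ i, (mu i - 1) := Finset.sum_le_sum h1
  _ = (∑ i, mu i) - n := by rw [Finset.sum_sub_distrib]; simp
  _ ≤ (∑ i, mu i) - n := le_refl _

set_option maxHeartbeats 1000000 in
lemma logdet_ineq {A B : Matrix (Fin n) (Fin n) ℝ} (hA : A.PosDef) (hB : B.PosDef) :
    Real.log B.det ≤ Real.log A.det + (A⁻¹ * B).trace - n := by
  obtain ⟨U, lam, hU, hU', hAd⟩ := exists_diag hA.1
  have hlam : ∀ i, 0 < lam i := eig_pos hU hU' hAd hA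
  set Rinv : Matrix (Fin n) (Fin n) ℝ := U * diagonal (fun i => (Real.sqrt (lam i))⁻¹) * Uᴴ
    with hRinv
  have hsq : ∀ i, Real.sqrt (lam i) ≠ 0 := fun i => (Real.sqrt_pos.mpr (hlam i)).ne'
  have hRR : Rinv * Rinv = A⁻¹ := by
    rw [hRinv, conj_mul_conj hU', diagonal_mul_diagonal, hAd,
      inv_conj hU hU' (fun i => (hlam i).ne')]
    have : (fun i => (Real.sqrt (lam i))⁻¹ * (Real.sqrt (lam i))⁻¹) = fun i => (lam i)⁻¹ :=
      funext fun i => by rw [← mul_inv, Real.mul_self_sqrt (hlam i).le]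
    rw [this]
  have hRpd : Rinv.PosDef := by
    rw [hRinv]
    exact posDef_conj (Matrix.PosDef.diagonal (fun i => inv_pos.mpr (Real.sqrt_pos.mpr (hlam i))))
      hU
  have hRherm : Rinvᴴ = Rinv := hRpd.1
  have hRunit : Rinv * (U * diagonal (fun i => Real.sqrt (lam i)) * Uᴴ) = 1 := by
    rw [hRinv, conj_mul_conj hU', diagonal_mul_diagonal]
    have : (fun i => (Real.sqrt (lam i))⁻¹ * Real.sqrt (lam i)) = fun _ => (1:ℝ) :=
      funext fun i => inv_mul_cancel₀ (hsq i)
    rw [this, diagonal_one, mul_one, hU]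
  have hCpd : (Rinv * B * Rinv).PosDef := by
    have h := posDef_conj2 hB hRunit
    rw [hRherm] at h
    exact h
  have key := log_det_le_trace hCpd
  have hdet : (Rinv * B * Rinv).det = (A.det)⁻¹ * B.det := by
    have h1 : (Rinv * Rinv).det = (A.det)⁻¹ := by
      rw [hRR, Matrix.det_nonsing_inv, Ring.inverse_eq_inv]
    rw [det_mul, det_mul]
    calc Rinv.det * B.det * Rinv.det = (Rinv.det * Rinv.det) * B.det := by ring
    _ = (A.det)⁻¹ * B.det := by rw [← det_mul, h1]
  have htr : (Rinv * B * Rinv).trace = (A⁻¹ * B).trace := by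
    rw [trace_mul_cycle Rinv B Rinv, hRR]
  rw [hdet, htr] at key
  have hlog : Real.log ((A.det)⁻¹ * B.det) = Real.log B.det - Real.log A.det := by
    rw [Real.log_mul (inv_ne_zero hA.det_pos.ne') hB.det_pos.ne', Real.log_inv]
    ring
  rw [hlog] at key
  linarith

lemma dot_self_eq {x : Fin n → ℝ} : x ⬝ᵥ x = ∑ i, (x i)^2 := by
  simp [dotProduct, pow_two]

lemma quadF {s : ℕ} (F : Matrix (Fin s) (Fin n) ℝ) (w : Fin n → ℝ) :
    ∑ j, (F.mulVec w j)^2 = w ⬝ᵥ ((Fᵀ * F) *ᵥ w) := by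
  rw [← mulVec_mulVec, dotProduct_mulVec w Fᵀ, vecMul_transpose, dot_self_eq]

section sig
variable {s : ℕ} {F : Matrix (Fin s) (Fin n) ℝ} {U : Matrix (Fin n) (Fin n) ℝ} {lam : Fin n → ℝ}
variable (hU : U * Uᴴ = 1) (hU' : Uᴴ * U = 1) (hA : Fᵀ * F = U * diagonal lam * Uᴴ)
include hU hU' hA

lemma sigma_greatest (i₀ : Fin n) (hmax : ∀ i, lam i ≤ lam i₀) :
    IsGreatest {x : ℝ | ∃ w : Fin n → ℝ, (∑ i, (w i)^2) = 1 ∧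
      x = Real.sqrt (∑ j, (F.mulVec w j)^2)} (Real.sqrt (lam i₀)) := by
  constructor
  · refine ⟨U *ᵥ Pi.single i₀ 1, ?_, ?_⟩
    · rw [← dot_self_eq, dot_conj hU', dot_self_eq]
      rw [Finset.sum_eq_single i₀] <;> simp +contextual [Pi.single_apply]
    · rw [quadF, quad_eq hU hU' hA, single_quad]
  · rintro x ⟨w, hw, rfl⟩
    apply Real.sqrt_le_sqrt
    rw [quadF]
    have hw2 : w = U *ᵥ (Uᴴ *ᵥ w) := by rw [mulVec_mulVec, hU, one_mulVec]
    have hdc : (Uᴴ *ᵥ w) ⬝ᵥ (Uᴴ *ᵥ w) = w ⬝ᵥ w := by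
      have := dot_conj (U := Uᴴ) (by rw [conjTranspose_conjTranspose]; exact hU) w w
      exact this
    have hsum : ∑ i, ((Uᴴ *ᵥ w) i)^2 = 1 := by
      rw [← dot_self_eq, hdc, dot_self_eq, hw]
    calc w ⬝ᵥ ((Fᵀ * F) *ᵥ w)
        = (U *ᵥ (Uᴴ *ᵥ w)) ⬝ᵥ ((Fᵀ * F) *ᵥ (U *ᵥ (Uᴴ *ᵥ w))) := by rw [← hw2]
      _ = ∑ i, lam i * ((Uᴴ *ᵥ w) i)^2 := quad_eq hU hU' hA _
      _ ≤ ∑ i, lam i₀ * ((Uᴴ *ᵥ w) i)^2 :=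
          Finset.sum_le_sum fun i _ => mul_le_mul_of_nonneg_right (hmax i) (sq_nonneg _)
      _ = lam i₀ := by rw [← Finset.mul_sum, hsum, mul_one]

lemma sigmaMax_eq' (i₀ : Fin n) (hmax : ∀ i, lam i ≤ lam i₀) :
    sigmaMax F = Real.sqrt (lam i₀) :=
  (sigma_greatest hU hU' hA i₀ hmax).csSup_eq

end sig

lemma posDef_smul {A : Matrix (Fin n) (Fin n) ℝ} (hA : A.PosDef) {c : ℝ} (hc : 0 < c) :
    (c • A).PosDef := by
  refine posDef_iff_dotProduct_mulVec.mpr ⟨?_, ?_⟩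
  · show (c • A)ᴴ = c • A
    rw [conjTranspose_smul, hA.1]
    simp
  · intro x hx
    rw [smul_mulVec, dotProduct_smul, smul_eq_mul]
    exact mul_pos hc (hA.dotProduct_mulVec_pos hx)

section scalar
variable {lam : Fin n → ℝ}

lemma fpos {q : ℝ} (hq : 0 ≤ q) (hlam : ∀ i, 0 ≤ lam i) (h1 : ∀ i, q * lam i < 1) (i : Fin n) :
    0 < 1 - q * lam i := by linarith [h1 i]

lemma trS_pos [Nonempty (Fin n)] {q : ℝ} (h : ∀ i, 0 < 1 - q * lam i) :
    0 < ∑ i, (1 - q * lam i)⁻¹ :=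
  Finset.sum_pos (fun i _ => inv_pos.mpr (h i)) Finset.univ_nonempty

lemma trLS_nonneg {q : ℝ} (hlam : ∀ i, 0 ≤ lam i) (h : ∀ i, 0 < 1 - q * lam i) :
    0 ≤ ∑ i, lam i * (1 - q * lam i)⁻¹ :=
  Finset.sum_nonneg (fun i _ => mul_nonneg (hlam i) (inv_pos.mpr (h i)).le)

/-- strict monotonicity cross-product inequality -/
lemma key_ineq (hlam : ∀ i, 0 ≤ lam i) {a b : ℝ} (ha : 0 ≤ a) (hab : a < b)
    (hb1 : ∀ i, b * lam i < 1) (hex : ∃ i j, lam i ≠ lam j) :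
    (∑ i, lam i * (1 - a * lam i)⁻¹) * (∑ i, (1 - b * lam i)⁻¹) <
    (∑ i, lam i * (1 - b * lam i)⁻¹) * (∑ i, (1 - a * lam i)⁻¹) := by
  have ha1 : ∀ i, a * lam i < 1 := fun i =>
    lt_of_le_of_lt (mul_le_mul_of_nonneg_right hab.le (hlam i)) (hb1 i)
  have hfa : ∀ i, 0 < 1 - a * lam i := fpos ha hlam ha1
  have hfb : ∀ i, 0 < 1 - b * lam i := fpos (ha.trans hab.le) hlam hb1
  set fa : Fin n → ℝ := fun i => (1 - a * lam i)⁻¹ with hfa_def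
  set fb : Fin n → ℝ := fun i => (1 - b * lam i)⁻¹ with hfb_def
  have hfa' : ∀ i, 0 < fa i := fun i => inv_pos.mpr (hfa i)
  have hfb' : ∀ i, 0 < fb i := fun i => inv_pos.mpr (hfb i)
  have fdiff : ∀ i j, fb i * fa j - fa i * fb j =
      (b - a) * (lam i - lam j) * (fa i * fa j * fb i * fb j) := by
    intro i j
    have n1 : (1 - a * lam i) ≠ 0 := (hfa i).ne'
    have n2 : (1 - a * lam j) ≠ 0 := (hfa j).ne'
    have n3 : (1 - b * lam i) ≠ 0 := (hfb i).ne'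
    have n4 : (1 - b * lam j) ≠ 0 := (hfb j).ne'
    rw [hfa_def, hfb_def]
    rw [eq_comm, ← sub_eq_zero]
    field_simp
    ring
  rw [← sub_pos]
  have expand : (∑ i, lam i * fb i) * (∑ i, fa i) - (∑ i, lam i * fa i) * (∑ i, fb i)
      = ∑ i, ∑ j, (lam i * (fb i * fa j) - lam i * (fa i * fb j)) := by
    rw [Finset.sum_mul_sum, Finset.sum_mul_sum, ← Finset.sum_sub_distrib]
    congr 1; funext i
    rw [← Finset.sum_sub_distrib]
    congr 1; funext j
    ring
  rw [expand]
  set D : Fin n → Fin n → ℝ := fun i j => lam i * (fb i * fa j) - lam i * (fa i * fb j) with hD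
  have hswap : ∑ i, ∑ j, D i j = ∑ i, ∑ j, D j i := Finset.sum_comm
  have hcomb : ∑ i, ∑ j, D i j + ∑ i, ∑ j, D j i = ∑ i, ∑ j, (D i j + D j i) := by
    rw [← Finset.sum_add_distrib]
    congr 1; funext i
    rw [← Finset.sum_add_distrib]
  have hpt : ∀ i j, D i j + D j i = (b - a) * (lam i - lam j)^2 * (fa i * fa j * fb i * fb j) := by
    intro i j
    have h1 : D i j + D j i = (lam i - lam j) * (fb i * fa j - fa i * fb j) := by
      rw [hD]; ring
    rw [h1, fdiff i j]; ring
  have hterm_nonneg : ∀ i j, 0 ≤ D i j + D j i := by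
    intro i j
    rw [hpt i j]
    have hp : 0 < fa i * fa j * fb i * fb j :=
      mul_pos (mul_pos (mul_pos (hfa' i) (hfa' j)) (hfb' i)) (hfb' j)
    exact mul_nonneg (mul_nonneg (sub_nonneg.mpr hab.le) (sq_nonneg _)) hp.le
  have hpos : 0 < ∑ i, ∑ j, (D i j + D j i) := by
    obtain ⟨i₁, j₁, hij⟩ := hex
    apply Finset.sum_pos' (fun i _ => Finset.sum_nonneg (fun j _ => hterm_nonneg i j))
    refine ⟨i₁, Finset.mem_univ _, ?_⟩
    apply Finset.sum_pos' (fun j _ => hterm_nonneg i₁ j)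
    refine ⟨j₁, Finset.mem_univ _, ?_⟩
    rw [hpt i₁ j₁]
    have hp : 0 < fa i₁ * fa j₁ * fb i₁ * fb j₁ :=
      mul_pos (mul_pos (mul_pos (hfa' i₁) (hfa' j₁)) (hfb' i₁)) (hfb' j₁)
    have h2 : 0 < (lam i₁ - lam j₁)^2 := by
      have := sub_ne_zero.mpr hij
      positivity
    exact mul_pos (mul_pos (sub_pos.mpr hab) h2) hp
  have h2S : 0 < 2 * ∑ i, ∑ j, D i j := by
    rw [two_mul]
    calc (0:ℝ) < ∑ i, ∑ j, (D i j + D j i) := hpos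
    _ = ∑ i, ∑ j, D i j + ∑ i, ∑ j, D i j := by rw [← hcomb, ← hswap]
  linarith

end scalar

section scalar2
variable {lam : Fin n → ℝ} [Nonempty (Fin n)]

/-- strict monotonicity of the weighted-mean `g` -/
lemma g_lt (hlam : ∀ i, 0 ≤ lam i) {a b : ℝ} (ha : 0 ≤ a) (hab : a < b)
    (hb1 : ∀ i, b * lam i < 1) (hex : ∃ i j, lam i ≠ lam j) :
    (∑ i, lam i * (1 - a * lam i)⁻¹) / (∑ i, (1 - a * lam i)⁻¹) <
    (∑ i, lam i * (1 - b * lam i)⁻¹) / (∑ i, (1 - b * lam i)⁻¹) := by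
  have ha1 : ∀ i, a * lam i < 1 := fun i =>
    lt_of_le_of_lt (mul_le_mul_of_nonneg_right hab.le (hlam i)) (hb1 i)
  have hSa : 0 < ∑ i, (1 - a * lam i)⁻¹ := trS_pos (fpos ha hlam ha1)
  have hSb : 0 < ∑ i, (1 - b * lam i)⁻¹ := trS_pos (fpos (ha.trans hab.le) hlam hb1)
  rw [div_lt_div_iff₀ hSa hSb]
  exact key_ineq hlam ha hab hb1 hex

lemma g_continuousOn (hlam : ∀ i, 0 ≤ lam i) {b : ℝ} (hb1 : ∀ i, b * lam i < 1) (hb : 0 ≤ b) :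
    ContinuousOn (fun q => (∑ i, lam i * (1 - q * lam i)⁻¹) / (∑ i, (1 - q * lam i)⁻¹))
      (Set.Icc 0 b) := by
  have hne : ∀ q ∈ Set.Icc (0:ℝ) b, ∀ i, 1 - q * lam i ≠ 0 := by
    intro q hq i
    have h1 : q * lam i ≤ b * lam i := mul_le_mul_of_nonneg_right hq.2 (hlam i)
    have := hb1 i
    intro h; linarith [(by linarith : q * lam i < 1)]
  apply ContinuousOn.div
  · apply continuousOn_finset_sum
    intro i _
    exact (continuousOn_const.mul (((continuousOn_const.sub
      ((continuousOn_id.mul continuousOn_const))).inv₀ (fun q hq => hne q hq i))))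
  · apply continuousOn_finset_sum
    intro i _
    exact ((continuousOn_const.sub ((continuousOn_id.mul continuousOn_const))).inv₀
      (fun q hq => hne q hq i))
  · intro q hq
    have : ∀ i, 0 < 1 - q * lam i := by
      intro i
      rcases lt_or_eq_of_le (hq.1) with h | h
      · have h1 : q * lam i ≤ b * lam i := mul_le_mul_of_nonneg_right hq.2 (hlam i)
        linarith [hb1 i]
      · have h1 : q * lam i ≤ b * lam i := mul_le_mul_of_nonneg_right hq.2 (hlam i)
        linarith [hb1 i]
    exact (trS_pos this).ne'

/-- near the top of the interval, `g` exceeds any value below the max eigenvalue. -/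
lemma g_large (hlam : ∀ i, 0 ≤ lam i) (i₀ : Fin n) (hmax : ∀ i, lam i ≤ lam i₀)
    (hM : 0 < lam i₀) {t : ℝ} (ht : t < lam i₀) :
    ∃ b : ℝ, 0 < b ∧ (∀ i, b * lam i < 1) ∧
      t < (∑ i, lam i * (1 - b * lam i)⁻¹) / (∑ i, (1 - b * lam i)⁻¹) := by
  set M := lam i₀ with hMdef
  set C : ℝ := ∑ i, (M - lam i) * (1 - lam i / M)⁻¹ with hC
  have hC0 : 0 ≤ C := by
    apply Finset.sum_nonneg
    intro i _
    rcases eq_or_lt_of_le (hmax i) with h | h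
    · rw [h]; simp
    · have : 0 < 1 - lam i / M := by
        rw [sub_pos, div_lt_one hM]; exact h
      exact mul_nonneg (by linarith) (inv_pos.mpr this).le
  set δ : ℝ := min (1/2) ((M - t) / (2 * (C + 1))) with hδ
  have hδ0 : 0 < δ := lt_min (by norm_num) (div_pos (sub_pos.mpr ht) (by positivity))
  have hδh : δ ≤ 1/2 := min_le_left _ _
  have hδC : δ ≤ (M - t) / (2 * (C + 1)) := min_le_right _ _
  have hδ1 : δ < 1 := by linarith
  set b := (1 - δ) / M with hbdef
  have hb0 : 0 < b := div_pos (by linarith) hM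
  have hbM : b * M = 1 - δ := by rw [hbdef]; field_simp
  have hb1 : ∀ i, b * lam i < 1 := by
    intro i
    calc b * lam i ≤ b * M := mul_le_mul_of_nonneg_left (hmax i) hb0.le
      _ = 1 - δ := hbM
      _ < 1 := by linarith
  have hfb : ∀ i, 0 < 1 - b * lam i := fpos hb0.le hlam hb1
  have trSpos : 0 < ∑ i, (1 - b * lam i)⁻¹ := trS_pos hfb
  have hf0 : (1 - b * M)⁻¹ = δ⁻¹ := by rw [hbM]; ring_nf
  have htrS_ge : δ⁻¹ ≤ ∑ i, (1 - b * lam i)⁻¹ := by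
    rw [← hf0]
    exact Finset.single_le_sum (f := fun i => (1 - b * lam i)⁻¹)
      (fun i _ => (inv_pos.mpr (hfb i)).le) (Finset.mem_univ i₀)
  have hδtrS : 1 ≤ δ * ∑ i, (1 - b * lam i)⁻¹ := by
    calc (1:ℝ) = δ * δ⁻¹ := (mul_inv_cancel₀ hδ0.ne').symm
      _ ≤ δ * ∑ i, (1 - b * lam i)⁻¹ := mul_le_mul_of_nonneg_left htrS_ge hδ0.le
  have hnum : M * (∑ i, (1 - b * lam i)⁻¹) - (∑ i, lam i * (1 - b * lam i)⁻¹)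
      = ∑ i, (M - lam i) * (1 - b * lam i)⁻¹ := by
    rw [Finset.mul_sum, ← Finset.sum_sub_distrib]
    congr 1; funext i; ring
  have hsum : ∑ i, (M - lam i) * (1 - b * lam i)⁻¹ ≤ C := by
    apply Finset.sum_le_sum
    intro i _
    rcases eq_or_lt_of_le (hmax i) with h | h
    · rw [h]; simp
    · have h1 : 0 < 1 - lam i / M := by rw [sub_pos, div_lt_one hM]; exact h
      have h2 : 1 - lam i / M ≤ 1 - b * lam i := by
        have hble : b * lam i ≤ lam i / M := by
          rw [hbdef, div_mul_eq_mul_div, div_le_div_iff₀ hM hM]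
          nlinarith [mul_nonneg (hlam i) hM.le, mul_nonneg (mul_nonneg hδ0.le (hlam i)) hM.le]
        linarith
      have h3 : (1 - b * lam i)⁻¹ ≤ (1 - lam i / M)⁻¹ := inv_anti₀ h1 h2
      exact mul_le_mul_of_nonneg_left h3 (by linarith)
  have hMg : M - (∑ i, lam i * (1 - b * lam i)⁻¹) / (∑ i, (1 - b * lam i)⁻¹) ≤ C * δ := by
    have e : M - (∑ i, lam i * (1 - b * lam i)⁻¹) / (∑ i, (1 - b * lam i)⁻¹)
        = (M * (∑ i, (1 - b * lam i)⁻¹) - (∑ i, lam i * (1 - b * lam i)⁻¹))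
          / (∑ i, (1 - b * lam i)⁻¹) := by
      rw [sub_div, mul_div_assoc, div_self trSpos.ne', mul_one]
    rw [e, div_le_iff₀ trSpos, hnum]
    nlinarith [hsum, hδtrS, hC0, hδ0, trSpos]
  have hCδ : C * δ < M - t := by
    have h1 : C * δ ≤ C * ((M - t) / (2 * (C + 1))) := mul_le_mul_of_nonneg_left hδC hC0
    have h2 : C * ((M - t) / (2 * (C + 1))) < M - t := by
      rw [mul_div_assoc', div_lt_iff₀ (by positivity)]
      nlinarith [hC0, sub_pos.mpr ht]
    linarith
  exact ⟨b, hb0, hb1, by linarith⟩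

end scalar2


end Aux

set_option maxHeartbeats 2000000 in
/-- Constrained optimization identity: for `‖F‖_F/√ℓ < γ < σ_max(F)`,
`−(1/2)·max{ln det(ℓPi) : Pi ≻ 0, Tr Pi = 1, Tr(ΛPi) ≥ γ²}
  = min{𝒜(q) : q ∈ [0, σ_max(F)^{−2}), 𝒩(q) ≥ γ}`,
both extrema being attained, with the maximizing `Pi` proportional to `S(q_γ)`,
where `q_γ` is the unique point with `𝒩(q_γ) = γ`. -/
theorem constrained_optimization_identity
    (s ℓ : ℕ) (F : Matrix (Fin s) (Fin ℓ) ℝ)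
    (hΛ : ∀ c : ℝ, Fᵀ * F ≠ c • (1 : Matrix (Fin ℓ) (Fin ℓ) ℝ))
    (γ : ℝ) (hγ₁ : frobNorm F / Real.sqrt ℓ < γ) (hγ₂ : γ < sigmaMax F) :
    ∃ qγ ∈ Set.Ioo (0 : ℝ) ((sigmaMax F ^ 2)⁻¹),
      Nfun F qγ = γ ∧
      (∀ q' ∈ Set.Ioo (0 : ℝ) ((sigmaMax F ^ 2)⁻¹), Nfun F q' = γ → q' = qγ) ∧
      IsGreatest
        {x : ℝ | ∃ Pi : Matrix (Fin ℓ) (Fin ℓ) ℝ, Pi.PosDef ∧ Pi.trace = 1 ∧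
          γ^2 ≤ (Fᵀ * F * Pi).trace ∧ x = Real.log (((ℓ : ℝ) • Pi).det)}
        (Real.log (((ℓ : ℝ) • (((Sq F qγ).trace)⁻¹ • Sq F qγ)).det)) ∧
      IsLeast
        {x : ℝ | ∃ q ∈ Set.Ico (0 : ℝ) ((sigmaMax F ^ 2)⁻¹), γ ≤ Nfun F q ∧ x = Afun F q}
        (-(1 / 2) * Real.log (((ℓ : ℝ) • (((Sq F qγ).trace)⁻¹ • Sq F qγ)).det)) := by
  classical
  have hne : Nonempty (Fin ℓ) := by
    rcases Nat.eq_zero_or_pos ℓ with h | h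
    · exfalso
      apply hΛ 0
      subst h
      ext i j
      exact i.elim0
    · exact ⟨⟨0, h⟩⟩
  have hl0 : 0 < ℓ := (Classical.arbitrary (Fin ℓ)).pos
  have hpsd : (Fᵀ * F).PosSemidef := by
    have h := posSemidef_conjTranspose_mul_self F
    rwa [conjTranspose_eq_transpose_of_trivial] at h
  obtain ⟨U, lam, hU, hU', hAd⟩ := exists_diag hpsd.1
  have hlam : ∀ i, 0 ≤ lam i := eig_nonneg hU hU' hAd hpsd
  obtain ⟨i₀, hmax⟩ : ∃ i₀, ∀ i, lam i ≤ lam i₀ := by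
    obtain ⟨i₀, -, h⟩ := Finset.exists_max_image Finset.univ lam
      ⟨Classical.arbitrary _, Finset.mem_univ _⟩
    exact ⟨i₀, fun i => h i (Finset.mem_univ i)⟩
  have hex : ∃ i j, lam i ≠ lam j := by
    by_contra h
    push_neg at h
    exact hΛ (lam i₀) (A_scalar hU hU' hAd _ (fun i => h i i₀))
  have hγ0 : 0 < γ :=
    lt_of_le_of_lt (div_nonneg (Real.sqrt_nonneg _) (Real.sqrt_nonneg _)) hγ₁
  have hsig : sigmaMax F = Real.sqrt (lam i₀) := sigmaMax_eq' hU hU' hAd i₀ hmax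
  have hγ₂' : γ < Real.sqrt (lam i₀) := hsig ▸ hγ₂
  have hM0 : 0 < lam i₀ := by
    by_contra h
    push_neg at h
    rw [Real.sqrt_eq_zero'.mpr h] at hγ₂'
    linarith
  have hγM : γ^2 < lam i₀ := by
    have h1 : γ^2 < Real.sqrt (lam i₀)^2 :=
      pow_lt_pow_left₀ hγ₂' hγ0.le (by norm_num)
    rwa [Real.sq_sqrt hM0.le] at h1
  have hinv : (sigmaMax F ^ 2)⁻¹ = (lam i₀)⁻¹ := by rw [hsig, Real.sq_sqrt hM0.le]
  have htrL : (Fᵀ * F).trace = ∑ i, lam i := trace_A hU hU' hAd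
  have htrLnn : 0 ≤ ∑ i, lam i := Finset.sum_nonneg fun i _ => hlam i
  have hγ1' : (∑ i, lam i) / ℓ < γ^2 := by
    have h1 : (frobNorm F / Real.sqrt ℓ)^2 < γ^2 :=
      pow_lt_pow_left₀ hγ₁ (div_nonneg (Real.sqrt_nonneg _) (Real.sqrt_nonneg _)) (by norm_num)
    rw [div_pow, frobNorm, Real.sq_sqrt (by rw [htrL]; exact htrLnn),
      Real.sq_sqrt (Nat.cast_nonneg ℓ), htrL] at h1
    exact h1
  have hQ : ∀ q : ℝ, 0 ≤ q → q < (lam i₀)⁻¹ → ∀ i, q * lam i < 1 := by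
    intro q hq0 hq1 i
    calc q * lam i ≤ q * lam i₀ := mul_le_mul_of_nonneg_left (hmax i) hq0
      _ < (lam i₀)⁻¹ * lam i₀ := mul_lt_mul_of_pos_right hq1 hM0
      _ = 1 := inv_mul_cancel₀ hM0.ne'
  have hfq : ∀ q : ℝ, 0 ≤ q → q < (lam i₀)⁻¹ → ∀ i, 0 < 1 - q * lam i :=
    fun q h1 h2 => fpos h1 hlam (hQ q h1 h2)
  have hTr : ∀ q : ℝ, 0 ≤ q → q < (lam i₀)⁻¹ →
      (Sq F q).trace = ∑ i, (1 - q * lam i)⁻¹ :=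
    fun q h1 h2 => trace_Sq hU hU' hAd (fun i => (hfq q h1 h2 i).ne')
  have hTrL : ∀ q : ℝ, 0 ≤ q → q < (lam i₀)⁻¹ →
      (Fᵀ * F * Sq F q).trace = ∑ i, lam i * (1 - q * lam i)⁻¹ :=
    fun q h1 h2 => trace_mul_Sq hU hU' hAd (fun i => (hfq q h1 h2 i).ne')
  have hSpd : ∀ q : ℝ, 0 ≤ q → q < (lam i₀)⁻¹ → (Sq F q).PosDef :=
    fun q h1 h2 => posDef_Sq hU hU' hAd (hfq q h1 h2)
  have hXpd : ∀ q : ℝ, 0 ≤ q → q < (lam i₀)⁻¹ → (1 - q • (Fᵀ * F)).PosDef :=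
    fun q h1 h2 => posDef_one_sub hU hU' hAd (hfq q h1 h2)
  have hTpos : ∀ q : ℝ, 0 ≤ q → q < (lam i₀)⁻¹ → 0 < (Sq F q).trace := by
    intro q h1 h2
    rw [hTr q h1 h2]
    exact trS_pos (hfq q h1 h2)
  have hGnn : ∀ q : ℝ, 0 ≤ q → q < (lam i₀)⁻¹ →
      0 ≤ (∑ i, lam i * (1 - q * lam i)⁻¹) / (∑ i, (1 - q * lam i)⁻¹) := by
    intro q h1 h2
    exact div_nonneg (trLS_nonneg hlam (hfq q h1 h2)) (trS_pos (hfq q h1 h2)).le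
  have hNG : ∀ q : ℝ, 0 ≤ q → q < (lam i₀)⁻¹ → Nfun F q =
      Real.sqrt ((∑ i, lam i * (1 - q * lam i)⁻¹) / (∑ i, (1 - q * lam i)⁻¹)) := by
    intro q h1 h2
    rw [Nfun, hTr q h1 h2, hTrL q h1 h2]
  -- construct qγ via IVT
  obtain ⟨b, hb0, hb1, hgb⟩ := g_large hlam i₀ hmax hM0 hγM
  have hbMlt : b < (lam i₀)⁻¹ := by
    rw [← one_div, lt_div_iff₀ hM0]
    exact hb1 i₀
  have hG0 : (∑ i, lam i * (1 - (0:ℝ) * lam i)⁻¹) / (∑ i, (1 - (0:ℝ) * lam i)⁻¹)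
      = (∑ i, lam i) / ℓ := by
    simp [Finset.card_univ]
  have hIVT := intermediate_value_Icc hb0.le (g_continuousOn hlam hb1 hb0.le)
  have hmem : γ^2 ∈ Set.Icc
      ((∑ i, lam i * (1 - (0:ℝ) * lam i)⁻¹) / (∑ i, (1 - (0:ℝ) * lam i)⁻¹))
      ((∑ i, lam i * (1 - b * lam i)⁻¹) / (∑ i, (1 - b * lam i)⁻¹)) :=
    ⟨by rw [hG0]; exact hγ1'.le, hgb.le⟩
  obtain ⟨qγ, hq_mem, hgq0⟩ := hIVT hmem
  have hgq : (∑ i, lam i * (1 - qγ * lam i)⁻¹) / (∑ i, (1 - qγ * lam i)⁻¹) = γ^2 := hgq0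
  clear hgq0
  have hq0 : 0 < qγ := by
    rcases eq_or_lt_of_le hq_mem.1 with h | h
    · exfalso
      rw [← h, hG0] at hgq
      exact absurd hgq.symm (ne_of_gt hγ1')
    · exact h
  have hqlt : qγ < (lam i₀)⁻¹ := lt_of_le_of_lt hq_mem.2 hbMlt
  have hNγ : Nfun F qγ = γ := by
    rw [hNG qγ hq0.le hqlt, hgq, Real.sqrt_sq hγ0.le]
  -- uniqueness
  have huniq : ∀ q' ∈ Set.Ioo (0 : ℝ) ((sigmaMax F ^ 2)⁻¹), Nfun F q' = γ → q' = qγ := by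
    intro q' hq' hN'
    rw [hinv] at hq'
    have hG' : (∑ i, lam i * (1 - q' * lam i)⁻¹) / (∑ i, (1 - q' * lam i)⁻¹) = γ^2 := by
      have h1 : Real.sqrt ((∑ i, lam i * (1 - q' * lam i)⁻¹) / (∑ i, (1 - q' * lam i)⁻¹)) = γ := by
        rw [← hNG q' hq'.1.le hq'.2]; exact hN'
      rw [← Real.sq_sqrt (hGnn q' hq'.1.le hq'.2), h1]
    by_contra hne'
    rcases lt_or_gt_of_ne hne' with h | h
    · have := g_lt hlam hq'.1.le h (hQ qγ hq0.le hqlt) hex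
      rw [hG', hgq] at this
      exact lt_irrefl _ this
    · have := g_lt hlam hq0.le h (hQ q' hq'.1.le hq'.2) hex
      rw [hG', hgq] at this
      exact lt_irrefl _ this
  -- matrix quantities at qγ
  set SS := Sq F qγ with hSS
  set T := SS.trace with hT
  have hTpos' : 0 < T := hTpos qγ hq0.le hqlt
  have hSSpd : SS.PosDef := hSpd qγ hq0.le hqlt
  have hPistar_pd : ((T⁻¹ : ℝ) • SS).PosDef := posDef_smul hSSpd (inv_pos.mpr hTpos')
  have hPistar_tr : ((T⁻¹ : ℝ) • SS).trace = 1 := by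
    rw [trace_smul, smul_eq_mul, ← hT, inv_mul_cancel₀ hTpos'.ne']
  have hGq_eq : (Fᵀ * F * SS).trace / T = γ^2 := by
    rw [hSS, hT]
    rw [hTr qγ hq0.le hqlt, hTrL qγ hq0.le hqlt]
    exact hgq
  have hPistar_LS : (Fᵀ * F * ((T⁻¹ : ℝ) • SS)).trace = γ^2 := by
    rw [Matrix.mul_smul, trace_smul, smul_eq_mul, ← hGq_eq]
    ring
  -- inverse of Pi*
  have hXdet : IsUnit (1 - qγ • (Fᵀ * F)).det :=
    isUnit_iff_ne_zero.mpr (hXpd qγ hq0.le hqlt).det_pos.ne'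
  have hSX : SS * (1 - qγ • (Fᵀ * F)) = 1 := by
    rw [hSS]
    exact Matrix.nonsing_inv_mul _ hXdet
  have hPinv : ((T⁻¹ : ℝ) • SS)⁻¹ = T • (1 - qγ • (Fᵀ * F)) := by
    apply Matrix.inv_eq_right_inv
    rw [Matrix.smul_mul, Matrix.mul_smul, hSX, smul_smul, inv_mul_cancel₀ hTpos'.ne', one_smul]
  -- trace formula
  have htrace_formula : ∀ Pi : Matrix (Fin ℓ) (Fin ℓ) ℝ,
      ((T • (1 - qγ • (Fᵀ * F))) * Pi).trace = T * (Pi.trace - qγ * (Fᵀ * F * Pi).trace) := by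
    intro Pi
    rw [Matrix.smul_mul, trace_smul, smul_eq_mul, Matrix.sub_mul, Matrix.one_mul,
      Matrix.smul_mul, trace_sub, trace_smul, smul_eq_mul]
  have hTγ : T * (1 - qγ * γ^2) = ℓ := by
    have e1 : ((T⁻¹ : ℝ) • SS)⁻¹ * ((T⁻¹ : ℝ) • SS) = 1 :=
      Matrix.nonsing_inv_mul _ (isUnit_iff_ne_zero.mpr hPistar_pd.det_pos.ne')
    have e2 := htrace_formula ((T⁻¹ : ℝ) • SS)
    rw [← hPinv, e1, trace_one, hPistar_tr, hPistar_LS] at e2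
    rw [← e2]
    simp [Fintype.card_fin]
  -- upper bound
  have hub : ∀ Pi : Matrix (Fin ℓ) (Fin ℓ) ℝ, Pi.PosDef → Pi.trace = 1 →
      γ^2 ≤ (Fᵀ * F * Pi).trace →
      Real.log (((ℓ : ℝ) • Pi).det) ≤ Real.log (((ℓ : ℝ) • ((T⁻¹ : ℝ) • SS)).det) := by
    intro Pi hPd htr1 hγle
    have key := logdet_ineq hPistar_pd hPd
    rw [hPinv, htrace_formula Pi, htr1] at key
    have hred : Real.log Pi.det ≤ Real.log ((T⁻¹ : ℝ) • SS).det := by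
      have hprod : 0 ≤ T * qγ * ((Fᵀ * F * Pi).trace - γ^2) :=
        mul_nonneg (mul_pos hTpos' hq0).le (sub_nonneg.mpr hγle)
      nlinarith [key, hTγ]
    have hd1 : (((ℓ : ℝ)) • Pi).det = (ℓ:ℝ)^ℓ * Pi.det := by
      rw [det_smul, Fintype.card_fin]
    have hd2 : (((ℓ : ℝ)) • ((T⁻¹ : ℝ) • SS)).det = (ℓ:ℝ)^ℓ * ((T⁻¹ : ℝ) • SS).det := by
      rw [det_smul, Fintype.card_fin]
    have hlpos : (0:ℝ) < (ℓ:ℝ)^ℓ := by positivity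
    rw [hd1, hd2, Real.log_mul hlpos.ne' hPd.det_pos.ne',
      Real.log_mul hlpos.ne' hPistar_pd.det_pos.ne']
    linarith
  refine ⟨qγ, ⟨hq0, by rw [hinv]; exact hqlt⟩, hNγ, huniq, ⟨⟨(T⁻¹ : ℝ) • SS, hPistar_pd,
    hPistar_tr, le_of_eq hPistar_LS.symm, rfl⟩, ?_⟩, ?_, ?_⟩
  · rintro x ⟨Pi, hPd, htr1, hγle, rfl⟩
    exact hub Pi hPd htr1 hγle
  · -- IsLeast membership
    refine ⟨qγ, ⟨hq0.le, by rw [hinv]; exact hqlt⟩, le_of_eq hNγ.symm, ?_⟩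
    rw [Afun]
    congr 2
    rw [smul_smul, div_eq_mul_inv, ← hSS, ← hT]
  · -- IsLeast lower bound
    rintro x ⟨q, ⟨hq0', hqlt'⟩, hNge, rfl⟩
    rw [hinv] at hqlt'
    set Tq := (Sq F q).trace with hTq
    have hTqpos : 0 < Tq := hTpos q hq0' hqlt'
    have hPiq_pd : ((Tq⁻¹ : ℝ) • Sq F q).PosDef := posDef_smul (hSpd q hq0' hqlt')
      (inv_pos.mpr hTqpos)
    have hPiq_tr : ((Tq⁻¹ : ℝ) • Sq F q).trace = 1 := by
      rw [trace_smul, smul_eq_mul, ← hTq, inv_mul_cancel₀ hTqpos.ne']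
    have hγsq_le : γ^2 ≤ (Fᵀ * F * ((Tq⁻¹ : ℝ) • Sq F q)).trace := by
      rw [Matrix.mul_smul, trace_smul, smul_eq_mul]
      have h1 : γ ≤ Real.sqrt ((∑ i, lam i * (1 - q * lam i)⁻¹) / (∑ i, (1 - q * lam i)⁻¹)) := by
        rw [← hNG q hq0' hqlt']; exact hNge
      have h2 : γ^2 ≤ (∑ i, lam i * (1 - q * lam i)⁻¹) / (∑ i, (1 - q * lam i)⁻¹) := by
        have := pow_le_pow_left₀ hγ0.le h1 2
        rwa [Real.sq_sqrt (hGnn q hq0' hqlt')] at this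
      have h3 : Tq⁻¹ * (Fᵀ * F * Sq F q).trace
          = (∑ i, lam i * (1 - q * lam i)⁻¹) / (∑ i, (1 - q * lam i)⁻¹) := by
        rw [hTq, hTr q hq0' hqlt', hTrL q hq0' hqlt']
        ring
      linarith [h2, h3.le, h3.ge]
    have := hub ((Tq⁻¹ : ℝ) • Sq F q) hPiq_pd hPiq_tr hγsq_le
    have hAf : Afun F q = -(1/2) * Real.log (((ℓ : ℝ) • ((Tq⁻¹ : ℝ) • Sq F q)).det) := by
      rw [Afun]
      congr 2
      rw [smul_smul, div_eq_mul_inv, ← hTq]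
    rw [hAf]
    linarith
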